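/- arXiv:1003.5452 — 2 statements merged into one kernel-verified Lean document; each statement's English description precedes it below -/
import Mathlib

section
/- Let d ≥ 2 and 1 < p < ∞. Define f : ℝ → ℝ by f(γ) = -γ|γ|^{p-2}(γ(p-1) + d - p), and set γ* := (p-d)/p and c_H := |(p-d)/p|^p. Then: (a) f(γ*) = c_H; (b) f is strictly increasing on (-∞, γ*] and strictly decreasing on [γ*, ∞); (c) f(γ) → -∞ as γ → +∞ and as γ → -∞; consequently (d) for every λ < c_H there exist unique real numbers γ_-(λ) < γ* < γ_+(λ) with f(γ_-(λ)) = f(γ_+(λ)) = λ, and f(γ) ≤ c_H for all γ ∈ ℝ with equality only at γ = γ*. -/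
open Filter Topology Set

noncomputable section

lemma aux_sq_mul_abs {p : ℝ} (hp : 1 < p) (x : ℝ) :
    x * x * |x| ^ (p - 2) = |x| ^ p := by
  rcases eq_or_ne x 0 with rfl | hx
  · simp [Real.zero_rpow (by linarith : p ≠ 0)]
  · have h0 : (0:ℝ) < |x| := abs_pos.2 hx
    have h1 : x * x = |x| * |x| := (abs_mul_abs_self x).symm
    rw [h1, mul_assoc, ← Real.rpow_one_add' (le_of_lt h0) (by intro h; linarith : 1 + (p-2) ≠ 0)]
    rw [← Real.rpow_one_add' (le_of_lt h0) (by intro h; linarith : 1 + (1 + (p-2)) ≠ 0)]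
    congr 1; ring

lemma aux_abs_mul_abs {p : ℝ} (hp : 1 < p) (x : ℝ) :
    |x| * |x| ^ (p - 2) = |x| ^ (p - 1) := by
  rcases eq_or_ne x 0 with rfl | hx
  · simp [Real.zero_rpow (by intro h; linarith : p - 1 ≠ 0)]
  · have h0 : (0:ℝ) < |x| := abs_pos.2 hx
    rw [← Real.rpow_one_add' (le_of_lt h0) (by intro h; linarith : 1 + (p-2) ≠ 0)]
    congr 1; ring

lemma aux_continuous_g {p : ℝ} (hp : 1 < p) :
    Continuous (fun x : ℝ => x * |x| ^ (p - 2)) := by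
  rw [continuous_iff_continuousAt]
  intro x
  rcases eq_or_ne x 0 with rfl | hx
  · have hb : Tendsto (fun y : ℝ => |y| ^ (p - 1)) (𝓝 0) (𝓝 0) := by
      have h1 : ContinuousAt (fun y : ℝ => |y| ^ (p - 1)) 0 := by
        exact (Real.continuousAt_rpow_const _ _ (Or.inr (by linarith))).comp
          continuous_abs.continuousAt
      simpa [ContinuousAt, Real.zero_rpow (show p - 1 ≠ 0 by intro h; linarith)] using h1
    rw [ContinuousAt]
    rw [show (0:ℝ) * |0| ^ (p - 2) = 0 from zero_mul _]
    apply squeeze_zero_norm _ hb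
    intro y
    rw [Real.norm_eq_abs, abs_mul, abs_of_nonneg (Real.rpow_nonneg (abs_nonneg y) _)]
    exact le_of_eq (aux_abs_mul_abs hp y)
  · exact continuousAt_id.mul ((Real.continuousAt_rpow_const _ _
      (Or.inl (abs_ne_zero.2 hx))).comp continuous_abs.continuousAt)

lemma aux_hasDerivAt_g {p : ℝ} (hp : 1 < p) {x : ℝ} (hx : x ≠ 0) :
    HasDerivAt (fun γ : ℝ => γ * |γ| ^ (p - 2)) ((p - 1) * |x| ^ (p - 2)) x := by
  have h1 : HasDerivAt (fun γ : ℝ => |γ|) ((SignType.sign x : ℝ)) x := hasDerivAt_abs hx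
  have h2 : HasDerivAt (fun y : ℝ => y ^ (p - 2)) ((p - 2) * |x| ^ (p - 2 - 1)) |x| :=
    Real.hasDerivAt_rpow_const (Or.inl (abs_ne_zero.2 hx))
  have h3 : HasDerivAt (fun γ : ℝ => |γ| ^ (p - 2))
      ((p - 2) * |x| ^ (p - 2 - 1) * (SignType.sign x : ℝ)) x := h2.comp x h1
  have h4 : HasDerivAt (fun γ : ℝ => γ * |γ| ^ (p - 2))
      (1 * |x| ^ (p - 2) + x * ((p - 2) * |x| ^ (p - 2 - 1) * (SignType.sign x : ℝ))) x :=
    (hasDerivAt_id x).mul h3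
  have hs : x * (SignType.sign x : ℝ) = |x| := by
    rcases lt_or_gt_of_ne hx with h | h
    · simp [sign_neg h, abs_of_neg h]
    · simp [sign_pos h, abs_of_pos h]
  have hr : |x| ^ (p - 2 - 1) * |x| = |x| ^ (p - 2) := by
    rw [← Real.rpow_add_one (abs_ne_zero.2 hx)]
    congr 1; ring
  convert h4 using 1
  simp only [id_eq, one_mul]
  linear_combination (-(p-2) * |x| ^ (p-2-1)) * hs - (p-2) * hr

lemma aux_hasDerivAt_f (d p : ℝ) (hp : 1 < p) {x : ℝ} (hx : x ≠ 0) :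
    HasDerivAt (fun γ : ℝ => -(γ * |γ| ^ (p - 2) * (γ * (p - 1) + d - p)))
      (-((p - 1) * |x| ^ (p - 2) * (p * x + d - p))) x := by
  have hg := aux_hasDerivAt_g hp hx
  have hh : HasDerivAt (fun γ : ℝ => γ * (p - 1) + d - p) (p - 1) x := by
    have := (((hasDerivAt_id x).mul_const (p - 1)).add_const d).sub_const p
    simpa using this
  have : HasDerivAt (fun γ : ℝ => -(γ * |γ| ^ (p - 2) * (γ * (p - 1) + d - p)))
      (-((p - 1) * |x| ^ (p - 2) * (x * (p - 1) + d - p) + x * |x| ^ (p - 2) * (p - 1))) x :=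
    (hg.mul hh).neg
  convert this using 1
  ring

lemma aux_glue_mono {f : ℝ → ℝ} {b c : ℝ} (hbc : b ≤ c)
    (h1 : StrictMonoOn f (Iic b)) (h2 : StrictMonoOn f (Icc b c)) :
    StrictMonoOn f (Iic c) := by
  intro x hx y hy hxy
  rcases le_total y b with h | h
  · exact h1 (hxy.le.trans h) h hxy
  · rcases lt_or_ge x b with h' | h'
    · have hxb : f x < f b := h1 (mem_Iic.mpr h'.le) self_mem_Iic h'
      rcases h.eq_or_lt with rfl | h''
      · exact hxb
      · exact hxb.trans_le (h2 ⟨le_rfl, hbc⟩ ⟨h, hy⟩ h'').le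
    · exact h2 ⟨h', hxy.le.trans hy⟩ ⟨h, hy⟩ hxy

lemma aux_glue_anti {f : ℝ → ℝ} {a b : ℝ} (hab : a ≤ b)
    (h1 : StrictAntiOn f (Icc a b)) (h2 : StrictAntiOn f (Ici b)) :
    StrictAntiOn f (Ici a) := by
  intro x hx y hy hxy
  rcases le_total y b with h | h
  · exact h1 ⟨hx, hxy.le.trans h⟩ ⟨hx.trans hxy.le, h⟩ hxy
  · rcases lt_or_ge x b with h' | h'
    · have hby : f y ≤ f b := by
        rcases h.eq_or_lt with rfl | h''
        · exact le_rfl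
        · exact (h2 (mem_Ici.mpr le_rfl) h h'').le
      exact hby.trans_lt (h1 ⟨hx, h'.le⟩ ⟨hx.trans h'.le, le_rfl⟩ h')
    · exact h2 h' (h'.trans hxy.le) hxy

theorem stmt1 (d : ℕ) (hd : 2 ≤ d) (p : ℝ) (hp : 1 < p)
    (f : ℝ → ℝ) (hf : f = fun γ => -(γ * |γ| ^ (p - 2) * (γ * (p - 1) + d - p)))
    (γstar cH : ℝ) (hγstar : γstar = (p - d) / p) (hcH : cH = |(p - d) / p| ^ p) :
    -- (a)
    f γstar = cH ∧
    -- (b)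
    StrictMonoOn f (Set.Iic γstar) ∧ StrictAntiOn f (Set.Ici γstar) ∧
    -- (c)
    Tendsto f atTop atBot ∧ Tendsto f atBot atBot ∧
    -- (d)
    (∀ lam : ℝ, lam < cH →
      (∃! γ : ℝ, γ < γstar ∧ f γ = lam) ∧ (∃! γ : ℝ, γstar < γ ∧ f γ = lam)) ∧
    (∀ γ : ℝ, f γ ≤ cH ∧ (f γ = cH → γ = γstar)) := by
  have hp0 : p ≠ 0 := by linarith
  have hp1 : (0:ℝ) < p - 1 := by linarith
  -- (a)
  have hkey : γstar * (p - 1) + d - p = -γstar := by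
    rw [hγstar]; field_simp; ring
  have ha : f γstar = cH := by
    rw [hf]
    simp only
    rw [hkey, hcH, ← hγstar]
    have := aux_sq_mul_abs hp γstar
    nlinarith [this]
  -- continuity
  have hcont : Continuous f := by
    rw [hf]
    exact ((aux_continuous_g hp).mul (by continuity)).neg
  -- derivative facts
  have hderiv : ∀ x : ℝ, x ≠ 0 → deriv f x = -((p - 1) * |x| ^ (p - 2) * (p * x + d - p)) := by
    intro x hx
    rw [hf]
    exact (aux_hasDerivAt_f d p hp hx).deriv
  have hpγ : p * γstar = p - d := by rw [hγstar]; field_simp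
  have hppos : (0:ℝ) < p := by linarith
  have hfact : ∀ x : ℝ, -((p - 1) * |x| ^ (p - 2) * (p * x + d - p)) =
      (p - 1) * |x| ^ (p - 2) * p * (γstar - x) := by
    intro x
    linear_combination (-((p - 1) * |x| ^ (p - 2))) * hpγ
  have hDpos : ∀ x : ℝ, x ≠ 0 → x < γstar → 0 < deriv f x := by
    intro x hx hlt
    rw [hderiv x hx, hfact x]
    have habs : (0:ℝ) < |x| ^ (p - 2) := Real.rpow_pos_of_pos (abs_pos.2 hx) _
    exact mul_pos (mul_pos (mul_pos hp1 habs) hppos) (sub_pos.2 hlt)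
  have hDneg : ∀ x : ℝ, x ≠ 0 → γstar < x → deriv f x < 0 := by
    intro x hx hlt
    rw [hderiv x hx, hfact x]
    have habs : (0:ℝ) < |x| ^ (p - 2) := Real.rpow_pos_of_pos (abs_pos.2 hx) _
    exact mul_neg_of_pos_of_neg (mul_pos (mul_pos hp1 habs) hppos) (by linarith)
  -- (b) monotonicity
  set m := min γstar 0 with hm
  set M := max γstar 0 with hM
  have hm0 : m ≤ 0 := min_le_right _ _
  have hmγ : m ≤ γstar := min_le_left _ _
  have hM0 : 0 ≤ M := le_max_right _ _
  have hγM : γstar ≤ M := le_max_left _ _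
  have hmono1 : StrictMonoOn f (Iic m) := by
    apply strictMonoOn_of_deriv_pos (convex_Iic m) hcont.continuousOn
    intro x hxint
    rw [interior_Iic] at hxint
    exact hDpos x (by intro h; rw [h] at hxint; exact absurd hxint (not_lt.2 hm0))
      (lt_of_lt_of_le hxint hmγ)
  have hmono2 : StrictMonoOn f (Icc m γstar) := by
    apply strictMonoOn_of_deriv_pos (convex_Icc m γstar) hcont.continuousOn
    intro x hxint
    rw [interior_Icc] at hxint
    have hx0 : x ≠ 0 := by
      rintro rfl
      have h1 : m < 0 := hxint.1
      have h2 : (0:ℝ) < γstar := hxint.2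
      rw [hm, min_eq_right h2.le] at h1
      exact lt_irrefl _ h1
    exact hDpos x hx0 hxint.2
  have hmono : StrictMonoOn f (Iic γstar) := aux_glue_mono hmγ hmono1 hmono2
  have hanti1 : StrictAntiOn f (Icc γstar M) := by
    apply strictAntiOn_of_deriv_neg (convex_Icc γstar M) hcont.continuousOn
    intro x hxint
    rw [interior_Icc] at hxint
    have hx0 : x ≠ 0 := by
      rintro rfl
      have h1 : γstar < 0 := hxint.1
      have h2 : (0:ℝ) < M := hxint.2
      rw [hM, max_eq_right h1.le] at h2
      exact lt_irrefl _ h2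
    exact hDneg x hx0 hxint.1
  have hanti2 : StrictAntiOn f (Ici M) := by
    apply strictAntiOn_of_deriv_neg (convex_Ici M) hcont.continuousOn
    intro x hxint
    rw [interior_Ici] at hxint
    exact hDneg x (by intro h; rw [h] at hxint; exact absurd hxint (not_lt.2 hM0))
      (lt_of_le_of_lt hγM hxint)
  have hanti : StrictAntiOn f (Ici γstar) := aux_glue_anti hγM hanti1 hanti2
  -- (c) limits
  have htop : Tendsto f atTop atBot := by
    have h1 : Tendsto (fun γ : ℝ => γ ^ (p - 1)) atTop atTop :=
      tendsto_rpow_atTop hp1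
    have h2 : Tendsto (fun γ : ℝ => γ * (p - 1) + d - p) atTop atTop := by
      have h := tendsto_atTop_add_const_right atTop ((d:ℝ) - p)
        (tendsto_id.atTop_mul_const hp1)
      exact h.congr fun γ => by simp only [id_eq]; ring
    have h3 := h1.atTop_mul_atTop₀ h2
    have h4 : Tendsto (fun γ : ℝ => -(γ ^ (p - 1) * (γ * (p - 1) + d - p))) atTop atBot :=
      tendsto_neg_atTop_atBot.comp h3
    apply h4.congr'
    filter_upwards [eventually_gt_atTop (0:ℝ)] with γ hγ
    rw [hf]
    simp only
    congr 1
    have h5 : γ ^ (p - 1) = γ * γ ^ (p - 2) := by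
      rw [← Real.rpow_one_add' hγ.le (by intro h; linarith : 1 + (p-2) ≠ 0)]
      congr 1; ring
    rw [abs_of_pos hγ, ← h5]
  have hbot : Tendsto f atBot atBot := by
    have h1 : Tendsto (fun γ : ℝ => (-γ) ^ (p - 1)) atBot atTop :=
      (tendsto_rpow_atTop hp1).comp tendsto_neg_atBot_atTop
    have h2 : Tendsto (fun γ : ℝ => γ * (p - 1) + d - p) atBot atBot := by
      have h := tendsto_atBot_add_const_right atBot ((d:ℝ) - p)
        (tendsto_id.atBot_mul_const hp1)
      exact h.congr fun γ => by simp only [id_eq]; ring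
    have h3 := h1.atTop_mul_atBot₀ h2
    apply h3.congr'
    filter_upwards [eventually_lt_atBot (0:ℝ)] with γ hγ
    rw [hf]
    simp only
    have hng : (0:ℝ) < -γ := by linarith
    have h5 : (-γ) ^ (p - 1) = -γ * (-γ) ^ (p - 2) := by
      rw [← Real.rpow_one_add' hng.le (by intro h; linarith : 1 + (p-2) ≠ 0)]
      congr 1; ring
    have habs : γ * |γ| ^ (p - 2) = -((-γ) ^ (p - 1)) := by
      rw [abs_of_neg hγ, h5]; ring
    rw [habs]
    ring
  refine ⟨ha, hmono, hanti, htop, hbot, ?_, ?_⟩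
  · -- (d) existence/uniqueness
    intro lam hlam
    constructor
    · -- left branch
      obtain ⟨b, hb1, hb2⟩ : ∃ b, f b < lam ∧ b ≤ γstar - 1 := by
        have h1 : ∀ᶠ γ in atBot, f γ < lam := hbot.eventually (eventually_lt_atBot lam)
        have h2 : ∀ᶠ γ : ℝ in atBot, γ ≤ γstar - 1 := eventually_le_atBot _
        exact (h1.and h2).exists
      have hbγ : b ≤ γstar := by linarith
      have hmem : lam ∈ Icc (f b) (f γstar) := ⟨hb1.le, by rw [ha]; exact hlam.le⟩
      obtain ⟨γ, hγmem, hγval⟩ := intermediate_value_Icc hbγ hcont.continuousOn hmem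
      have hγlt : γ < γstar := by
        rcases hγmem.2.eq_or_lt with heq | h
        · exfalso; rw [heq, ha] at hγval; linarith
        · exact h
      refine ⟨γ, ⟨hγlt, hγval⟩, ?_⟩
      rintro y ⟨hy1, hy2⟩
      exact hmono.injOn hy1.le hγlt.le (by rw [hy2, hγval])
    · -- right branch
      obtain ⟨b, hb1, hb2⟩ : ∃ b, f b < lam ∧ γstar + 1 ≤ b := by
        have h1 : ∀ᶠ γ in atTop, f γ < lam := htop.eventually (eventually_lt_atBot lam)
        have h2 : ∀ᶠ γ : ℝ in atTop, γstar + 1 ≤ γ := eventually_ge_atTop _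
        exact (h1.and h2).exists
      have hγb : γstar ≤ b := by linarith
      have hmem : lam ∈ Icc (f b) (f γstar) := ⟨hb1.le, by rw [ha]; exact hlam.le⟩
      obtain ⟨γ, hγmem, hγval⟩ := intermediate_value_Icc' hγb hcont.continuousOn hmem
      have hγgt : γstar < γ := by
        rcases hγmem.1.eq_or_lt with heq | h
        · exfalso; rw [← heq, ha] at hγval; linarith
        · exact h
      refine ⟨γ, ⟨hγgt, hγval⟩, ?_⟩
      rintro y ⟨hy1, hy2⟩
      exact hanti.injOn hy1.le hγgt.le (by rw [hy2, hγval])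
  · intro γ
    rcases lt_trichotomy γ γstar with h | h | h
    · have := hmono (mem_Iic.mpr h.le) self_mem_Iic h
      rw [ha] at this
      exact ⟨this.le, fun heq => absurd heq this.ne⟩
    · exact ⟨h ▸ ha.le, fun _ => h⟩
    · have := hanti self_mem_Ici (mem_Ici.mpr h.le) h
      rw [ha] at this
      exact ⟨this.le, fun heq => absurd heq this.ne⟩
end
end

section
/- Let d ≥ 1, 1 < p < ∞, and let q be a real number with 1 ≤ q < d/p. Let X ⊆ ℝ^d be measurable and let V : ℝ^d → ℝ be measurable with ∫_{X ∩ {‖x‖ > 1}} |V|^q dx < ∞. Let 0 < a < b < ∞ and let φ : ℝ^d → ℝ be a bounded measurable function vanishing outside the annulus { x : a ≤ ‖x‖ ≤ b }. Then lim_{R → ∞} ∫_{X/R} R^p V(Rx) φ(x) dx = 0, where X/R := { x ∈ ℝ^d : Rx ∈ X }. -/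
open MeasureTheory Metric Filter Topology Set

noncomputable section

lemma young_aux {q t v : ℝ} (hq : 1 ≤ q) (ht : 0 < t) (hv : 0 ≤ v) :
    v ≤ t ^ (1 - q) * v ^ q + t := by
  rcases le_or_gt v t with h | h
  · have h1 : 0 ≤ t ^ (1 - q) * v ^ q :=
      mul_nonneg (Real.rpow_nonneg ht.le _) (Real.rpow_nonneg hv _)
    linarith
  · have hv0 : 0 < v := ht.trans h
    have h2 : v ^ (1 - q) ≤ t ^ (1 - q) :=
      Real.rpow_le_rpow_of_nonpos ht h.le (by linarith)
    have h3 : q + (1 - q) = 1 := by ring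
    calc v = v ^ q * v ^ (1 - q) := by
            rw [← Real.rpow_add hv0, h3, Real.rpow_one]
      _ ≤ v ^ q * t ^ (1 - q) :=
            mul_le_mul_of_nonneg_left h2 (Real.rpow_nonneg hv0.le _)
      _ = t ^ (1 - q) * v ^ q := mul_comm _ _
      _ ≤ _ := le_add_of_nonneg_right ht.le

theorem stmt7 (d : ℕ) (hd : 1 ≤ d) (p : ℝ) (hp : 1 < p)
    (q : ℝ) (hq1 : 1 ≤ q) (hq2 : q < (d : ℝ) / p)
    (X : Set (EuclideanSpace ℝ (Fin d))) (hX : MeasurableSet X)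
    (V : EuclideanSpace ℝ (Fin d) → ℝ) (hV : Measurable V)
    (hVLq : IntegrableOn (fun x => |V x| ^ q) (X ∩ {x : EuclideanSpace ℝ (Fin d) | 1 < ‖x‖}))
    (a b : ℝ) (ha : 0 < a) (hab : a < b)
    (φ : EuclideanSpace ℝ (Fin d) → ℝ) (hφmeas : Measurable φ)
    (M : ℝ) (hφbdd : ∀ x, |φ x| ≤ M)
    (hφsupp : ∀ x : EuclideanSpace ℝ (Fin d), ¬(a ≤ ‖x‖ ∧ ‖x‖ ≤ b) → φ x = 0) :
    Tendsto
      (fun R : ℝ => ∫ x in {x : EuclideanSpace ℝ (Fin d) | R • x ∈ X}, R ^ p * V (R • x) * φ x)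
      atTop (𝓝 0) := by
  have hq0 : 0 < q := lt_of_lt_of_le one_pos hq1
  have hp0 : 0 < p := lt_trans one_pos hp
  have hM : 0 ≤ M := le_trans (abs_nonneg _) (hφbdd 0)
  -- the exponent is negative
  have hexp : p - (d : ℝ) / q < 0 := by
    have h1 : q * p < d := by
      have := (lt_div_iff₀ hp0).mp hq2
      linarith [this]
    have : p < (d : ℝ) / q := by
      rw [lt_div_iff₀ hq0]; nlinarith
    linarith
  have hAmeas : MeasurableSet (X ∩ {x : EuclideanSpace ℝ (Fin d) | 1 < ‖x‖}) :=
    hX.inter (measurableSet_lt measurable_const measurable_norm)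
  set W : EuclideanSpace ℝ (Fin d) → ℝ :=
    (X ∩ {x : EuclideanSpace ℝ (Fin d) | 1 < ‖x‖}).indicator (fun y => |V y| ^ q) with hWdef
  have hWnn : ∀ y, 0 ≤ W y :=
    fun y => indicator_nonneg (fun z _ => Real.rpow_nonneg (abs_nonneg _) q) y
  have hWint : Integrable W := (integrable_indicator_iff hAmeas).mpr hVLq
  set ε : ℝ := ∫ y, W y with hεdef
  have hεnn : 0 ≤ ε := integral_nonneg hWnn
  set c : ℝ := (volume (closedBall (0 : EuclideanSpace ℝ (Fin d)) b)).toReal with hcdef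
  have hcnn : 0 ≤ c := ENNReal.toReal_nonneg
  apply squeeze_zero_norm' (a := fun R : ℝ => M * (ε + c) * R ^ (p - (d : ℝ) / q))
  · -- the eventual bound
    filter_upwards [eventually_gt_atTop (max 1 a⁻¹)] with R hR
    have hR1 : 1 < R := lt_of_le_of_lt (le_max_left _ _) hR
    have hR0 : 0 < R := lt_trans one_pos hR1
    have hRa : 1 < R * a := by
      have h := lt_of_le_of_lt (le_max_right 1 a⁻¹) hR
      calc (1 : ℝ) = a⁻¹ * a := by field_simp
        _ < R * a := mul_lt_mul_of_pos_right h ha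
    set S : Set (EuclideanSpace ℝ (Fin d)) := {x | R • x ∈ X} with hSdef
    have hSmeas : MeasurableSet S := hX.preimage (measurable_id.const_smul R)
    set t : ℝ := R ^ (-((d : ℝ) / q)) with htdef
    have ht0 : 0 < t := Real.rpow_pos_of_pos hR0 _
    set A1 : ℝ := R ^ ((d : ℝ) - (d : ℝ) / q) with hA1def
    have hA1nn : 0 ≤ A1 := Real.rpow_nonneg hR0.le _
    have htq : t ^ (1 - q) = A1 := by
      rw [htdef, ← Real.rpow_mul hR0.le, hA1def]
      congr 1
      field_simp
      ring
    set g : EuclideanSpace ℝ (Fin d) → ℝ := fun x =>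
      M * R ^ p * (closedBall (0 : EuclideanSpace ℝ (Fin d)) b).indicator
        (fun x => A1 * W (R • x) + t) x with hgdef
    have hg_nonneg : ∀ x, 0 ≤ g x := fun x =>
      mul_nonneg (mul_nonneg hM (Real.rpow_nonneg hR0.le p))
        (indicator_nonneg
          (fun y _ => add_nonneg (mul_nonneg hA1nn (hWnn _)) ht0.le) x)
    have hptwise : ∀ x,
        ‖S.indicator (fun x => R ^ p * V (R • x) * φ x) x‖ ≤ g x := by
      intro x
      by_cases hx : x ∈ S
      · rw [indicator_of_mem hx]
        by_cases hx2 : a ≤ ‖x‖ ∧ ‖x‖ ≤ b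
        · have hxb : x ∈ closedBall (0 : EuclideanSpace ℝ (Fin d)) b :=
            mem_closedBall_zero_iff.mpr hx2.2
          have hnorm : 1 < ‖R • x‖ := by
            rw [norm_smul, Real.norm_eq_abs, abs_of_pos hR0]
            calc (1 : ℝ) < R * a := hRa
              _ ≤ R * ‖x‖ := by
                  exact mul_le_mul_of_nonneg_left hx2.1 hR0.le
          have hmem : R • x ∈ X ∩ {x : EuclideanSpace ℝ (Fin d) | 1 < ‖x‖} := ⟨hx, hnorm⟩
          have hWval : W (R • x) = |V (R • x)| ^ q := indicator_of_mem hmem _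
          have hVb : |V (R • x)| ≤ t ^ (1 - q) * |V (R • x)| ^ q + t :=
            young_aux hq1 ht0 (abs_nonneg _)
          have hRp : 0 < R ^ p := Real.rpow_pos_of_pos hR0 p
          have hnval : ‖R ^ p * V (R • x) * φ x‖ = R ^ p * |V (R • x)| * |φ x| := by
            rw [Real.norm_eq_abs, abs_mul, abs_mul, abs_of_pos hRp]
          rw [hnval, hgdef]
          simp only [indicator_of_mem hxb, hWval]
          calc R ^ p * |V (R • x)| * |φ x|
              ≤ (R ^ p * (t ^ (1 - q) * |V (R • x)| ^ q + t)) * M := by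
                apply mul_le_mul _ (hφbdd x) (abs_nonneg _)
                · exact mul_nonneg hRp.le (by positivity)
                · exact mul_le_mul_of_nonneg_left hVb hRp.le
            _ = M * R ^ p * (A1 * |V (R • x)| ^ q + t) := by rw [htq]; ring
        · rw [hφsupp x hx2, mul_zero, norm_zero]
          exact hg_nonneg x
      · rw [indicator_of_notMem hx, norm_zero]
        exact hg_nonneg x
    -- integrability of the dominating function
    have hWR : Integrable (fun x : EuclideanSpace ℝ (Fin d) => W (R • x)) :=
      hWint.comp_smul hR0.ne'
    have hinner : IntegrableOn (fun x : EuclideanSpace ℝ (Fin d) => A1 * W (R • x) + t)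
        (closedBall (0 : EuclideanSpace ℝ (Fin d)) b) :=
      ((hWR.const_mul A1).integrableOn).add
        (integrableOn_const measure_closedBall_lt_top.ne)
    have hgint : Integrable g :=
      (hinner.integrable_indicator measurableSet_closedBall).const_mul (M * R ^ p)
    -- the set-integral bound
    have hsub : ∫ x in closedBall (0 : EuclideanSpace ℝ (Fin d)) b, W (R • x)
        ≤ R ^ (-(d : ℝ)) * ε := by
      have h1 : ∫ x in closedBall (0 : EuclideanSpace ℝ (Fin d)) b, W (R • x)
          ≤ ∫ x, W (R • x) :=
        setIntegral_le_integral hWR (ae_of_all _ fun x => hWnn _)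
      have h2 : ∫ x : EuclideanSpace ℝ (Fin d), W (R • x) = R ^ (-(d : ℝ)) * ε := by
        rw [Measure.integral_comp_smul volume W R, finrank_euclideanSpace_fin]
        have : |(R ^ d)⁻¹| = R ^ (-(d : ℝ)) := by
          rw [abs_of_pos (by positivity), Real.rpow_neg hR0.le, Real.rpow_natCast]
        rw [this, smul_eq_mul, hεdef]
      linarith
    calc ‖∫ x in S, R ^ p * V (R • x) * φ x‖
        = ‖∫ x, S.indicator (fun x => R ^ p * V (R • x) * φ x) x‖ := by
          rw [integral_indicator hSmeas]
      _ ≤ ∫ x, g x := norm_integral_le_of_norm_le hgint (ae_of_all _ hptwise)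
      _ = M * R ^ p * ∫ x in closedBall (0 : EuclideanSpace ℝ (Fin d)) b,
            (A1 * W (R • x) + t) := by
          rw [hgdef, integral_const_mul, integral_indicator measurableSet_closedBall]
      _ = M * R ^ p * (A1 * (∫ x in closedBall (0 : EuclideanSpace ℝ (Fin d)) b, W (R • x))
            + t * c) := by
          rw [integral_add (hWR.const_mul A1).integrableOn
            (integrableOn_const measure_closedBall_lt_top.ne),
            integral_const_mul, setIntegral_const, smul_eq_mul, hcdef, Measure.real]
          ring
      _ ≤ M * R ^ p * (A1 * (R ^ (-(d : ℝ)) * ε) + t * c) := by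
          have hRp : 0 ≤ R ^ p := Real.rpow_nonneg hR0.le p
          apply mul_le_mul_of_nonneg_left _ (mul_nonneg hM hRp)
          apply add_le_add_left
          exact mul_le_mul_of_nonneg_left hsub hA1nn
      _ = M * (ε + c) * R ^ (p - (d : ℝ) / q) := by
          rw [hA1def, htdef]
          rw [show M * R ^ p * (R ^ ((d:ℝ) - (d:ℝ)/q) * (R ^ (-(d:ℝ)) * ε)
              + R ^ (-((d:ℝ)/q)) * c)
            = M * ((R ^ p * R ^ ((d:ℝ) - (d:ℝ)/q) * R ^ (-(d:ℝ))) * ε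
              + (R ^ p * R ^ (-((d:ℝ)/q))) * c) from by ring]
          rw [← Real.rpow_add hR0, ← Real.rpow_add hR0, ← Real.rpow_add hR0]
          rw [show p + ((d:ℝ) - (d:ℝ)/q) + -(d:ℝ) = p - (d:ℝ)/q from by ring,
            show p + -((d:ℝ)/q) = p - (d:ℝ)/q from by ring]
          ring
  · -- the bound tends to zero
    have h1 : Tendsto (fun R : ℝ => R ^ (p - (d : ℝ) / q)) atTop (𝓝 0) := by
      have h := tendsto_rpow_neg_atTop (y := (d : ℝ) / q - p) (by linarith)
      convert h using 2 with R
      rw [neg_sub]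
    have h2 := h1.const_mul (M * (ε + c))
    simpa using h2
end
end
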